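/- Let n ≥ 2 and let G be the path graph on Fin n with the natural linear order on Fin n. Then for every k with 2^k ≥ n − 1, the Hash-to-Min cluster of the minimum vertex contains the entire path: C k 0 = the set of all vertices of Fin n. -/

import Mathlib

open scoped Classical

/-- On the path graph on `Fin n` (`n ≥ 2`) with the natural order, for
every `k` with `2^k ≥ n - 1`, the Hash-to-Min cluster of the minimum vertex `0`
contains the entire path. -/
theorem hashToMin_monotone_path_converges {n : ℕ} (hn : 2 ≤ n)
    (G : SimpleGraph (Fin n)) [DecidableRel G.Adj]
    (hG : ∀ i j : Fin n, G.Adj i j ↔ Nat.dist i.val j.val = 1)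
    (C : ℕ → Fin n → Finset (Fin n))
    (hC0 : ∀ v : Fin n, C 0 v = {v} ∪ G.neighborFinset v)
    (hCs : ∀ (k : ℕ) (v : Fin n), C (k + 1) v =
      ((Finset.univ.filter fun u : Fin n => (C k u).min = (v : WithTop (Fin n))).biUnion
        (C k)) ∪
      (Finset.univ.filter fun w : Fin n =>
        ∃ u : Fin n, v ∈ C k u ∧ (C k u).min = (w : WithTop (Fin n))))
    (k : ℕ) (hk : n - 1 ≤ 2 ^ k) :
    C k ⟨0, by omega⟩ = Finset.univ := by
  classical
  set n0 : Fin n := ⟨0, by omega⟩ with hn0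
  have hn0v : n0.val = 0 := rfl
  -- The key invariant, for all k with 2^k ≤ n - 1:
  -- (bounds) every element of C k v lies within distance 2^k of v, and
  -- (membership) every j within distance 2^k of v satisfying the reflection
  -- bound j + v + 2^k ≤ 2n - 1 belongs to C k v.
  have key : ∀ k : ℕ, 2 ^ k ≤ n - 1 →
      (∀ v x : Fin n, x ∈ C k v → v.val ≤ x.val + 2 ^ k ∧ x.val ≤ v.val + 2 ^ k) ∧
      (∀ v j : Fin n, v.val ≤ j.val + 2 ^ k → j.val ≤ v.val + 2 ^ k →
        j.val + v.val + 2 ^ k ≤ 2 * n - 1 → j ∈ C k v) := by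
    intro k
    induction k with
    | zero =>
      intro hk1
      constructor
      · intro v x hx
        rw [hC0, Finset.mem_union, Finset.mem_singleton,
          SimpleGraph.mem_neighborFinset] at hx
        rcases hx with h | h
        · subst h; omega
        · have hd := (hG v x).mp h
          have hd' : v.val - x.val + (x.val - v.val) = 1 := hd
          omega
      · intro v j h1 h2 h3
        rw [hC0, Finset.mem_union, Finset.mem_singleton,
          SimpleGraph.mem_neighborFinset]
        by_cases hjv : j = v
        · exact Or.inl hjv
        · right
          apply (hG v j).mpr
          have hne : j.val ≠ v.val := fun h => hjv (Fin.ext h)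
          show v.val - j.val + (j.val - v.val) = 1
          simp only [pow_zero] at h1 h2
          omega
    | succ k ih =>
      intro hk1
      have hpow : (2:ℕ) ^ (k+1) = 2 * 2 ^ k := by rw [pow_succ]; ring
      have hp0 : 0 < 2 ^ k := Nat.pow_pos (by norm_num)
      have hk0 : 2 ^ k ≤ n - 1 := by omega
      obtain ⟨B, M⟩ := ih hk0
      -- exact minimum at level k
      have minEq : ∀ u : Fin n, (C k u).min =
          ((⟨u.val - 2 ^ k, lt_of_le_of_lt (Nat.sub_le _ _) u.isLt⟩ : Fin n) :
            WithTop (Fin n)) := by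
        intro u
        set j : Fin n := ⟨u.val - 2 ^ k, lt_of_le_of_lt (Nat.sub_le _ _) u.isLt⟩ with hj
        have hjv : j.val = u.val - 2 ^ k := rfl
        have hu := u.isLt
        apply le_antisymm
        · exact Finset.min_le (M u j (by omega) (by omega) (by omega))
        · apply Finset.le_min
          intro b hb
          have hb' := (B u b hb).1
          exact WithTop.coe_le_coe.mpr (Fin.le_def.mpr (by omega))
      constructor
      · -- bounds at k+1
        intro v x hx
        have hv := v.isLt
        have hxlt := x.isLt
        rw [hCs, Finset.mem_union] at hx
        rcases hx with hx | hx
        · rw [Finset.mem_biUnion] at hx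
          obtain ⟨u, hu, hxu⟩ := hx
          rw [Finset.mem_filter] at hu
          have hmin := hu.2
          rw [minEq u] at hmin
          have huv : u.val - 2 ^ k = v.val :=
            congrArg Fin.val (WithTop.coe_inj.mp hmin)
          have hb := B u x hxu
          omega
        · rw [Finset.mem_filter] at hx
          obtain ⟨-, u, hvu, hmin⟩ := hx
          rw [minEq u] at hmin
          have hux : u.val - 2 ^ k = x.val :=
            congrArg Fin.val (WithTop.coe_inj.mp hmin)
          have hb := B u v hvu
          omega
      · -- membership at k+1
        intro v j h1 h2 h3
        have hv := v.isLt
        have hjlt := j.isLt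
        rw [hCs, Finset.mem_union]
        rcases le_or_gt v.val j.val with hvj | hvj
        · -- j on the right of v: use the biUnion part with u = v + 2^k
          left
          rw [Finset.mem_biUnion]
          have hun : v.val + 2 ^ k < n := by omega
          refine ⟨⟨v.val + 2 ^ k, hun⟩, ?_, ?_⟩
          · rw [Finset.mem_filter]
            refine ⟨Finset.mem_univ _, ?_⟩
            rw [minEq]
            exact WithTop.coe_inj.mpr (Fin.ext (by simp))
          · exact M _ j (by simpa using by omega) (by simpa using by omega)
              (by simpa using by omega)
        · -- j on the left of v: use the second part with u = j + 2^k
          right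
          rw [Finset.mem_filter]
          have hun : j.val + 2 ^ k < n := by omega
          refine ⟨Finset.mem_univ _, ⟨j.val + 2 ^ k, hun⟩, ?_, ?_⟩
          · exact M _ v (by simpa using by omega) (by simpa using by omega)
              (by simpa using by omega)
          · rw [minEq]
            exact WithTop.coe_inj.mpr (Fin.ext (by simp))
  -- main induction on k
  have main : ∀ k : ℕ, n - 1 ≤ 2 ^ k → C k n0 = Finset.univ := by
    intro k
    induction k with
    | zero =>
      intro h
      have hn2 : n = 2 := by simpa using by omega
      apply Finset.eq_univ_iff_forall.mpr
      intro x
      rw [hC0, Finset.mem_union, Finset.mem_singleton,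
        SimpleGraph.mem_neighborFinset]
      have hx := x.isLt
      by_cases h0 : x.val = 0
      · exact Or.inl (Fin.ext (by omega))
      · right
        apply (hG n0 x).mpr
        show n0.val - x.val + (x.val - n0.val) = 1
        omega
    | succ k ih =>
      intro h
      by_cases h' : n - 1 ≤ 2 ^ k
      · -- persistence: C k n0 is already univ
        have hu := ih h'
        apply Finset.eq_univ_iff_forall.mpr
        intro x
        rw [hCs, Finset.mem_union]
        left
        rw [Finset.mem_biUnion]
        refine ⟨n0, ?_, ?_⟩
        · rw [Finset.mem_filter]
          refine ⟨Finset.mem_univ _, ?_⟩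
          rw [hu]
          apply le_antisymm
          · exact Finset.min_le (Finset.mem_univ n0)
          · exact Finset.le_min fun b _ => WithTop.coe_le_coe.mpr
              (Fin.le_def.mpr (by omega))
        · rw [hu]; exact Finset.mem_univ x
      · -- crossing step: 2^k < n - 1 ≤ 2^(k+1)
        have hk0 : 2 ^ k ≤ n - 1 := by omega
        have hpow : (2:ℕ) ^ (k+1) = 2 * 2 ^ k := by rw [pow_succ]; ring
        have hp0 : 0 < 2 ^ k := Nat.pow_pos (by norm_num)
        obtain ⟨B, M⟩ := key k hk0
        have minEq : ∀ u : Fin n, (C k u).min =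
            ((⟨u.val - 2 ^ k, lt_of_le_of_lt (Nat.sub_le _ _) u.isLt⟩ : Fin n) :
              WithTop (Fin n)) := by
          intro u
          set j : Fin n := ⟨u.val - 2 ^ k, lt_of_le_of_lt (Nat.sub_le _ _) u.isLt⟩ with hj
          have hjv : j.val = u.val - 2 ^ k := rfl
          have hu := u.isLt
          apply le_antisymm
          · exact Finset.min_le (M u j (by omega) (by omega) (by omega))
          · apply Finset.le_min
            intro b hb
            have hb' := (B u b hb).1
            exact WithTop.coe_le_coe.mpr (Fin.le_def.mpr (by omega))
        apply Finset.eq_univ_iff_forall.mpr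
        intro x
        have hx := x.isLt
        rw [hCs, Finset.mem_union]
        left
        rw [Finset.mem_biUnion]
        refine ⟨⟨x.val - 2 ^ k, lt_of_le_of_lt (Nat.sub_le _ _) x.isLt⟩, ?_, ?_⟩
        · rw [Finset.mem_filter]
          refine ⟨Finset.mem_univ _, ?_⟩
          rw [minEq]
          refine WithTop.coe_inj.mpr (Fin.ext ?_)
          show x.val - 2 ^ k - 2 ^ k = n0.val
          omega
        · exact M _ x (by simpa using by omega) (by simpa using by omega)
            (by simpa using by omega)
  exact main k hk
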